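/- arXiv:1511.08981 — 2 statements merged into one kernel-verified Lean document; each statement's English description precedes it below -/
import Mathlib

section
/- Let X be a normal space and Y a topological space. If f : X → Y has F_σ preimages of all open sets, then the preimage of every functionally closed subset of Y is a functionally G_δ set in X. -/
open Set

/-- A functionally closed set: `φ ⁻¹' {0}` for some continuous `φ : Y → [0,1]`. -/
def FunctionallyClosed {Y : Type*} [TopologicalSpace Y] (F : Set Y) : Prop :=
  ∃ φ : Y → ℝ, Continuous φ ∧ (∀ y, φ y ∈ Set.Icc (0:ℝ) 1) ∧ F = φ ⁻¹' {0}

/-- A cozero set: `g ⁻¹' (ℝ \ {0})` for some continuous real-valued `g`. -/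
def Cozero {X : Type*} [TopologicalSpace X] (U : Set X) : Prop :=
  ∃ g : X → ℝ, Continuous g ∧ U = g ⁻¹' ({0}ᶜ)

/-- A set is functionally `G_δ` if it is a countable intersection of cozero sets. -/
def FunctionallyGDelta {X : Type*} [TopologicalSpace X] (A : Set X) : Prop :=
  ∃ U : ℕ → Set X, (∀ n, Cozero (U n)) ∧ A = ⋂ n, U n

def IsFSigma {X : Type*} [TopologicalSpace X] (A : Set X) : Prop :=
  ∃ F : ℕ → Set X, (∀ n, IsClosed (F n)) ∧ A = ⋃ n, F n

/-- Separate an Fσ set from a disjoint closed set by a cozero set. -/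
lemma cozero_sep {X : Type*} [TopologicalSpace X] [NormalSpace X]
    {A G : Set X} (hA : ∃ F : ℕ → Set X, (∀ n, IsClosed (F n)) ∧ A = ⋃ n, F n)
    (hG : IsClosed G) (hd : A ∩ G = ∅) :
    ∃ g : X → ℝ, Continuous g ∧ A ⊆ g ⁻¹' ({0}ᶜ) ∧ (g ⁻¹' ({0}ᶜ)) ∩ G = ∅ := by
  obtain ⟨F, hFc, rfl⟩ := hA
  have hdn : ∀ n, Disjoint G (F n) := by
    intro n
    rw [Set.disjoint_iff_inter_eq_empty, Set.inter_comm]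
    apply Set.eq_empty_of_subset_empty
    rw [← hd]
    exact Set.inter_subset_inter_left _ (Set.subset_iUnion F n)
  choose h h0 h1 hIcc using fun n =>
    exists_continuous_zero_one_of_isClosed hG (hFc n) (hdn n)
  set g : X → ℝ := fun x => ∑' n, (1/2 : ℝ)^n * h n x with hg
  have habs : |(1/2 : ℝ)| = 1/2 := abs_of_pos (by norm_num)
  have hnorm : ∀ n x, ‖(1/2 : ℝ)^n * h n x‖ ≤ (1/2 : ℝ)^n := by
    intro n x
    rw [norm_mul]
    have h01 := hIcc n x
    have hb : ‖h n x‖ ≤ 1 := by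
      rw [Real.norm_eq_abs, abs_le]; constructor <;> linarith [h01.1, h01.2]
    calc ‖(1/2 : ℝ)^n‖ * ‖h n x‖ ≤ ‖(1/2 : ℝ)^n‖ * 1 :=
          mul_le_mul_of_nonneg_left hb (norm_nonneg _)
      _ = (1/2 : ℝ)^n := by rw [mul_one, norm_pow, Real.norm_eq_abs, habs]
  have hsummul : Summable (fun n : ℕ => (1/2 : ℝ)^n) :=
    summable_geometric_of_lt_one (by norm_num) (by norm_num)
  have hgc : Continuous g :=
    continuous_tsum (fun n => (continuous_const.mul (h n).continuous)) hsummul hnorm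
  have hsumx : ∀ x, Summable (fun n : ℕ => (1/2 : ℝ)^n * h n x) := fun x =>
    Summable.of_norm_bounded hsummul (fun n => hnorm n x)
  have hterm_nonneg : ∀ n x, 0 ≤ (1/2 : ℝ)^n * h n x := fun n x =>
    mul_nonneg (by positivity) (hIcc n x).1
  refine ⟨g, hgc, ?_, ?_⟩
  · rintro x hx
    obtain ⟨n, hn⟩ := Set.mem_iUnion.1 hx
    have hpos : 0 < g x := by
      have h1n : h n x = 1 := h1 n hn
      have hle : (1/2 : ℝ)^n * h n x ≤ g x := Summable.le_tsum (hsumx x) n (fun m _ => hterm_nonneg m x)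
      have hle2 : (1/2 : ℝ)^n ≤ g x := by rwa [h1n, mul_one] at hle
      have hp : (0:ℝ) < (1/2:ℝ)^n := by positivity
      linarith
    simp only [Set.mem_preimage, Set.mem_compl_iff, Set.mem_singleton_iff]
    exact ne_of_gt hpos
  · apply Set.eq_empty_of_subset_empty
    rintro x ⟨hx, hxG⟩
    exfalso
    apply hx
    have hz : ∀ n, (1/2 : ℝ)^n * h n x = 0 := by
      intro n; rw [h0 n hxG]; simp
    have : g x = 0 := by
      rw [hg]
      calc (∑' n, (1/2 : ℝ)^n * h n x) = ∑' _ : ℕ, (0:ℝ) := tsum_congr hz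
        _ = 0 := tsum_zero
    simpa [Set.mem_singleton_iff] using this

/-- For `X` normal: if `f : X → Y` has `F_σ` preimages of open sets, then the preimage of every
functionally closed subset of `Y` is functionally `G_δ` in `X` (i.e. `H₁(X,Y) ⊆ K₁^w(X,Y)`). -/
theorem H1_subset_K1w_of_normal {X Y : Type*} [TopologicalSpace X] [TopologicalSpace Y]
    [NormalSpace X] (f : X → Y) (hf : ∀ V : Set Y, IsOpen V → IsFSigma (f ⁻¹' V)) :
    ∀ F : Set Y, FunctionallyClosed F → FunctionallyGDelta (f ⁻¹' F) := by
  rintro F ⟨φ, hφc, hφ01, rfl⟩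
  have key : ∀ n : ℕ, ∃ V : ℕ → Set X, (∀ m, Cozero (V m)) ∧
      (f ⁻¹' (φ ⁻¹' {0}) ⊆ ⋂ m, V m) ∧
      (∀ x, x ∈ ⋂ m, V m → φ (f x) ≤ 1/(n+1 : ℝ)) := by
    intro n
    set A : Set X := f ⁻¹' (φ ⁻¹' (Set.Iio (1/(n+2 : ℝ)))) with hA
    set B : Set X := f ⁻¹' (φ ⁻¹' (Set.Ioi (1/(n+1 : ℝ)))) with hB
    have hAF : IsFSigma A := hf _ (isOpen_Iio.preimage hφc)
    have hBF : IsFSigma B := hf _ (isOpen_Ioi.preimage hφc)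
    obtain ⟨G, hGc, hGeq⟩ := hBF
    have sep : ∀ m, ∃ g : X → ℝ, Continuous g ∧ A ⊆ g ⁻¹' ({0}ᶜ) ∧
        (g ⁻¹' ({0}ᶜ)) ∩ G m = ∅ := by
      intro m
      apply cozero_sep hAF (hGc m)
      apply Set.eq_empty_of_subset_empty
      rintro x ⟨hxA, hxG⟩
      have hxB : x ∈ B := hGeq ▸ Set.mem_iUnion.2 ⟨m, hxG⟩
      have h1 : φ (f x) < 1/(n+2 : ℝ) := hxA
      have h2 : 1/(n+1 : ℝ) < φ (f x) := hxB
      have h3 : (1/(n+2 : ℝ)) ≤ 1/(n+1 : ℝ) := by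
        apply one_div_le_one_div_of_le <;> push_cast <;> linarith [Nat.cast_nonneg (α := ℝ) n]
      exact absurd (lt_trans h2 (lt_of_lt_of_le h1 h3)) (lt_irrefl _)
    choose g hgc hgA hgG using sep
    refine ⟨fun m => g m ⁻¹' ({0}ᶜ), fun m => ⟨g m, hgc m, rfl⟩, ?_, ?_⟩
    · intro x hx
      apply Set.mem_iInter.2
      intro m
      apply hgA m
      show φ (f x) < 1/(n+2 : ℝ)
      have h0 : φ (f x) = 0 := hx
      rw [h0]; positivity
    · intro x hx
      by_contra hlt
      push_neg at hlt
      have hxB : x ∈ B := hlt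
      rw [hGeq] at hxB
      obtain ⟨m, hm⟩ := Set.mem_iUnion.1 hxB
      have hxV : x ∈ g m ⁻¹' ({0}ᶜ) := Set.mem_iInter.1 hx m
      have hmem : x ∈ (g m ⁻¹' ({0}ᶜ)) ∩ G m := ⟨hxV, hm⟩
      rw [hgG m] at hmem
      exact hmem
  choose V hVcoz hVsub hVle using key
  let e : ℕ ≃ ℕ × ℕ := (Denumerable.eqv (ℕ × ℕ)).symm
  refine ⟨fun k => V (e k).1 (e k).2, fun k => hVcoz _ _, ?_⟩
  ext x
  simp only [Set.mem_iInter]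
  constructor
  · intro hx k
    exact Set.mem_iInter.1 (hVsub (e k).1 hx) (e k).2
  · intro hx
    have hxall : ∀ n, x ∈ ⋂ m, V n m := by
      intro n
      apply Set.mem_iInter.2
      intro m
      have := hx (e.symm (n, m))
      simpa using this
    have hle : ∀ n : ℕ, φ (f x) ≤ 1/(n+1 : ℝ) := fun n => hVle n x (hxall n)
    have h0 : 0 ≤ φ (f x) := (hφ01 (f x)).1
    have hzero : φ (f x) = 0 := by
      by_contra hne
      have hpos : 0 < φ (f x) := lt_of_le_of_ne h0 (Ne.symm hne)
      obtain ⟨n, hn⟩ := exists_nat_one_div_lt hpos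
      exact absurd (hle n) (not_le.2 hn)
    exact hzero
end

section
/- Let Y = ℝ ∪ {∞} be the one-point compactification of the discrete real line, and define f : ℝ → Y (with ℝ carrying its usual topology) by f(0) = ∞ and f(x) = x otherwise. Then the preimage under f of every functionally closed subset of Y is a G_δ set in ℝ, but there exists an open subset V of Y whose preimage f⁻¹(V) is not an F_σ subset of ℝ. -/
/-- The real line with the discrete topology. -/
def Rdisc : Type := ℝ

instance : TopologicalSpace Rdisc := ⊥

instance : DiscreteTopology Rdisc := ⟨rfl⟩

/-- In the one-point compactification of a discrete space, the coe-preimage complement of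
an open set containing `∞` is finite. -/
lemma finite_compl_of_isOpen_mem_infty {X : Type*} [TopologicalSpace X] [DiscreteTopology X]
    {U : Set (OnePoint X)} (hU : IsOpen U) (hinf : OnePoint.infty ∈ U) :
    ((OnePoint.some ⁻¹' U : Set X)ᶜ).Finite := by
  have := ((OnePoint.isOpen_iff_of_mem hinf).mp hU).2
  exact isCompact_iff_finite.mp this

lemma irrational_not_fsigma : ¬ IsFSigma {x : ℝ | Irrational x} := by
  rintro ⟨F, hcl, hEq⟩
  have hGδ : IsGδ {x : ℝ | Irrational x}ᶜ := by
    rw [hEq, Set.compl_iUnion]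
    exact .iInter fun n => (hcl n).isOpen_compl.isGδ
  have hdense : Dense ({x : ℝ | Irrational x}ᶜ) := by
    have : Set.range ((↑) : ℚ → ℝ) ⊆ {x : ℝ | Irrational x}ᶜ := by
      intro x hx hx'
      exact hx' hx
    exact Rat.denseRange_cast.mono this
  have := (Dense.inter_of_Gδ hGδ IsGδ.setOf_irrational hdense dense_irrational)
  have h0 : ({x : ℝ | Irrational x}ᶜ ∩ {x : ℝ | Irrational x}) = ∅ :=
    Set.compl_inter_self _
  rw [h0] at this
  exact Set.not_nonempty_empty this.nonempty

open OnePoint in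
/-- For the one-point compactification `Y` of the discrete real line and the map `f : ℝ → Y`
with `f 0 = ∞` and `f x = x` otherwise, preimages of functionally closed subsets of `Y` are
`G_δ` in `ℝ`, yet some open subset of `Y` has a preimage that is not `F_σ`:
`f ∈ K₁^w(ℝ,Y) \\ H₁(ℝ,Y)`. -/
theorem onePoint_discrete_example :
    ∃ f : ℝ → OnePoint Rdisc,
      (f 0 = ∞) ∧ (∀ x : ℝ, x ≠ 0 → f x = OnePoint.some (x : Rdisc)) ∧
      (∀ F : Set (OnePoint Rdisc), FunctionallyClosed F → IsGδ (f ⁻¹' F)) ∧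
      (∃ V : Set (OnePoint Rdisc), IsOpen V ∧ ¬ IsFSigma (f ⁻¹' V)) := by
  classical
  set f : ℝ → OnePoint Rdisc := fun x => if x = 0 then ∞ else OnePoint.some (x : Rdisc) with hf
  refine ⟨f, by simp [hf], fun x hx => (by simp [hf, hx]; rfl), ?_, ?_⟩
  · rintro F ⟨φ, hφc, hφ01, rfl⟩
    by_cases hinf : φ ∞ = 0
    · -- complement of the preimage is countable
      set U : ℕ → Set (OnePoint Rdisc) := fun n => φ ⁻¹' Metric.ball 0 (1 / (n + 1)) with hU
      have hUopen : ∀ n, IsOpen (U n) := fun n => Metric.isOpen_ball.preimage hφc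
      have hUinf : ∀ n, ∞ ∈ U n := fun n => by
        simp only [hU, Set.mem_preimage, hinf, Metric.mem_ball, dist_self]; positivity
      have hKfin : ∀ n, ((OnePoint.some ⁻¹' U n : Set Rdisc)ᶜ).Finite := fun n =>
        finite_compl_of_isOpen_mem_infty (hUopen n) (hUinf n)
      have hsub : (f ⁻¹' (φ ⁻¹' {0}))ᶜ ⊆ ⋃ n, (((OnePoint.some ⁻¹' U n : Set Rdisc)ᶜ : Set Rdisc) : Set ℝ) := by
        intro x hx
        have hx0 : φ (f x) ≠ 0 := hx
        have hxne : x ≠ 0 := by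
          intro h; apply hx0; rw [h]; simpa [hf] using hinf
        obtain ⟨n, hn⟩ := exists_nat_one_div_lt (show (0:ℝ) < |φ (f x)| from abs_pos.mpr hx0)
        refine Set.mem_iUnion.mpr ⟨n, ?_⟩
        have hfx : f x = OnePoint.some (x : Rdisc) := by simp [hf, hxne]; rfl
        intro hmem
        have : |φ (f x)| < 1 / (n + 1) := by
          have : f x ∈ U n := by rw [hfx]; exact hmem
          simpa [hU, Real.dist_eq] using this
        exact absurd hn (not_lt.mpr this.le)
      have hcnt : ((f ⁻¹' (φ ⁻¹' {0}))ᶜ).Countable :=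
        (Set.countable_iUnion fun n => (hKfin n).countable).mono hsub
      simpa using hcnt.isGδ_compl
    · -- the preimage is finite, hence closed, hence Gδ
      have hUopen : IsOpen (φ ⁻¹' {(0:ℝ)}ᶜ) := isClosed_singleton.isOpen_compl.preimage hφc
      have hKfin : ((OnePoint.some ⁻¹' (φ ⁻¹' {(0:ℝ)}ᶜ) : Set Rdisc)ᶜ).Finite :=
        finite_compl_of_isOpen_mem_infty hUopen hinf
      have hsub : f ⁻¹' (φ ⁻¹' {0}) ⊆
          (((OnePoint.some ⁻¹' (φ ⁻¹' {(0:ℝ)}ᶜ) : Set Rdisc)ᶜ : Set Rdisc) : Set ℝ) := by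
        intro x hx
        have hx0 : φ (f x) = 0 := hx
        have hxne : x ≠ 0 := by
          intro h; apply hinf; rw [← hx0, h]; simp [hf]
        have hfx : f x = OnePoint.some (x : Rdisc) := by simp [hf, hxne]; rfl
        intro hmem
        exact hmem (show φ (OnePoint.some (x : Rdisc)) ∈ ({0} : Set ℝ) by have h' := hx0; rw [hfx] at h'; exact h')
      have hfin : (f ⁻¹' (φ ⁻¹' {0})).Finite := hKfin.subset hsub
      exact hfin.isClosed.isGδ
  · refine ⟨OnePoint.some '' {x : Rdisc | Irrational (x : ℝ)}, ?_, ?_⟩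
    · rw [OnePoint.isOpen_image_coe]
      exact isOpen_discrete _
    · have hpre : f ⁻¹' (OnePoint.some '' {x : Rdisc | Irrational (x : ℝ)})
          = {x : ℝ | Irrational x} := by
        ext x
        constructor
        · rintro ⟨y, hy, hxy⟩
          by_cases hx : x = 0
          · simp [hf, hx] at hxy
          · have : f x = OnePoint.some (x : Rdisc) := by simp [hf, hx]; rfl
            rw [this] at hxy
            have : y = (x : Rdisc) := OnePoint.coe_injective hxy
            rwa [this] at hy
        · intro hx
          have hxne : x ≠ 0 := fun h => not_irrational_zero (h ▸ hx)
          exact ⟨(x : Rdisc), hx, by simp [hf, hxne]⟩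
      rw [hpre]
      exact irrational_not_fsigma
end
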